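/- Let n ≥ 1, let E = EuclideanSpace ℝ (Fin n), and let α and β be star partial homeomorphisms of E. Then there exists a star L in E with α ≈ β.trans (PartialEquiv.ofSet L) if and only if α.source ⊆ β.source and α agrees with β on α.source (Set.EqOn α β α.source). (This characterizes the natural partial order α ≤ β on the inverse semigroup of star partial homeomorphisms: α ≤ β iff α is a restriction of β.) -/
import Mathlib


noncomputable def radial {n : ℕ} (L : Set (EuclideanSpace ℝ (Fin n)))
    (u : EuclideanSpace ℝ (Fin n)) : ℝ :=
  sSup {c : ℝ | 0 ≤ c ∧ c • u ∈ L}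

def IsStar {n : ℕ} (L : Set (EuclideanSpace ℝ (Fin n))) : Prop :=
  IsCompact L ∧ (0 : EuclideanSpace ℝ (Fin n)) ∈ interior L ∧
    (∀ x ∈ L, segment ℝ 0 x ⊆ L) ∧
    ContinuousOn (radial L) (Metric.sphere (0 : EuclideanSpace ℝ (Fin n)) 1)

def IsStarPartialHomeo {n : ℕ}
    (α : PartialEquiv (EuclideanSpace ℝ (Fin n)) (EuclideanSpace ℝ (Fin n))) : Prop :=
  IsStar α.source ∧ IsStar α.target ∧
    ContinuousOn α α.source ∧ ContinuousOn α.symm α.target ∧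
    α 0 = 0 ∧ ∀ x ∈ α.source, α '' (segment ℝ 0 x) = segment ℝ 0 (α x)

theorem stmt_8 (n : ℕ) (hn : 1 ≤ n)
    (α β : PartialEquiv (EuclideanSpace ℝ (Fin n)) (EuclideanSpace ℝ (Fin n)))
    (hα : IsStarPartialHomeo α) (hβ : IsStarPartialHomeo β) :
    (∃ L : Set (EuclideanSpace ℝ (Fin n)), IsStar L ∧
        α ≈ β.trans (PartialEquiv.ofSet L)) ↔
      α.source ⊆ β.source ∧ Set.EqOn α β α.source := by
  constructor
  · rintro ⟨L, -, h⟩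
    have hs := PartialEquiv.EqOnSource.source_eq h
    simp only [PartialEquiv.trans_source, PartialEquiv.ofSet_source] at hs
    constructor
    · rw [hs]; exact Set.inter_subset_left
    · intro x hx
      have := PartialEquiv.EqOnSource.eqOn h hx
      simpa using this
  · rintro ⟨hsub, heq⟩
    refine ⟨α.target, hα.2.1, ?_, ?_⟩
    · simp only [PartialEquiv.trans_source, PartialEquiv.ofSet_source]
      ext x
      constructor
      · intro hx
        refine ⟨hsub hx, ?_⟩
        simp only [Set.mem_preimage]
        rw [← heq hx]
        exact α.map_source hx
      · rintro ⟨hxβ, hxL⟩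
        simp only [Set.mem_preimage] at hxL
        set y := α.symm (β x) with hy
        have hyS : y ∈ α.source := α.map_target hxL
        have h1 : α y = β x := α.right_inv hxL
        have h2 : β y = β x := by rw [← heq hyS, h1]
        have := β.injOn (hsub hyS) hxβ h2
        rwa [← this]
    · intro x hx
      exact heq hx
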